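/- For the linear residual GNN, let Kr(A, X^{(0)}) := span{A^{i−1}·X^{(0)}_{:,j} : i ∈ {1,…,n}, j ∈ {1,…,k}} be the Krylov subspace of A and X^{(0)}. For any target matrix Y ∈ ℝ^{n×k}, there exist T ∈ ℕ and weight matrices W₁^{(0)}, W₂^{(0)}, …, W₁^{(T−1)}, W₂^{(T−1)} such that X^{(T)} = Y if and only if every column of Y lies in Kr(A, X^{(0)}). -/
import Mathlib


open Matrix

/-- Cayley–Hamilton: `A ^ n` is a linear combination of lower powers. -/
lemma aux_CH {n : ℕ} (A : Matrix (Fin n) (Fin n) ℝ) :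
    ∃ c : Fin n → ℝ, A ^ n = ∑ i : Fin n, c i • A ^ (i : ℕ) := by
  have hdeg : (Matrix.charpoly A).natDegree = n := by
    simpa using Matrix.charpoly_natDegree_eq_dim A
  have h := Matrix.aeval_self_charpoly A
  rw [Polynomial.aeval_eq_sum_range, hdeg, Finset.sum_range_succ] at h
  have hc : (Matrix.charpoly A).coeff n = 1 := by
    have := (Matrix.charpoly_monic A).coeff_natDegree
    rwa [hdeg] at this
  rw [hc, one_smul] at h
  refine ⟨fun i => -(Matrix.charpoly A).coeff i, ?_⟩
  rw [Fin.sum_univ_eq_sum_range (fun i => -(Matrix.charpoly A).coeff i • A ^ i) n]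
  have h' : A ^ n = -∑ i ∈ Finset.range n, (Matrix.charpoly A).coeff i • A ^ i :=
    (neg_eq_of_add_eq_zero_right h).symm
  rw [h', ← Finset.sum_neg_distrib]
  simp [neg_smul]

/-- For the linear residual GNN
`X^{(t+1)} = (1−α)·A·X^{(t)}·W₁^{(t)} + α·X^{(0)}·W₂^{(t)}`,
a target matrix `Y` is reachable (i.e. there exist `T` and weight matrices with `X^{(T)} = Y`)
iff every column of `Y` lies in the Krylov subspace
`Kr(A, X⁰) = span{A^(i-1)·X⁰_{:,j} : i ∈ [n], j ∈ [k]}`. -/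
theorem stmt_0 {n k : ℕ}
    (A : Matrix (Fin n) (Fin n) ℝ) (hA : A.IsSymm)
    (α : ℝ) (hα : α ∈ Set.Ioo (0 : ℝ) 1)
    (X0 : Matrix (Fin n) (Fin k) ℝ)
    (Kr : Submodule ℝ (Fin n → ℝ))
    (hKr : Kr = Submodule.span ℝ
      {w : Fin n → ℝ | ∃ (i : Fin n) (j : Fin k), w = (A ^ (i : ℕ)) *ᵥ (fun r => X0 r j)})
    (Y : Matrix (Fin n) (Fin k) ℝ) :
    (∃ (T : ℕ) (W₁ W₂ : ℕ → Matrix (Fin k) (Fin k) ℝ)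
        (X : ℕ → Matrix (Fin n) (Fin k) ℝ),
        X 0 = X0 ∧
        (∀ t, X (t + 1) = (1 - α) • (A * X t * W₁ t) + α • (X0 * W₂ t)) ∧
        X T = Y)
      ↔ (∀ j : Fin k, (fun r => Y r j) ∈ Kr) := by
  obtain ⟨hα0, hα1⟩ := hα
  obtain ⟨c, hc⟩ := aux_CH A
  -- the generating set, as a range
  have hset : {w : Fin n → ℝ | ∃ (i : Fin n) (j : Fin k), w = (A ^ (i : ℕ)) *ᵥ (fun r => X0 r j)}
      = Set.range (fun p : Fin n × Fin k => (A ^ (p.1 : ℕ)) *ᵥ (fun r => X0 r p.2)) := by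
    ext w
    constructor
    · rintro ⟨i, j, rfl⟩; exact ⟨(i, j), rfl⟩
    · rintro ⟨⟨i, j⟩, rfl⟩; exact ⟨i, j, rfl⟩
  -- Kr is stable under multiplication by A
  have hAcl : ∀ v ∈ Kr, A *ᵥ v ∈ Kr := by
    intro v hv
    rw [hKr] at hv ⊢
    induction hv using Submodule.span_induction with
    | mem x hx =>
      obtain ⟨i, j, rfl⟩ := hx
      rw [mulVec_mulVec, ← pow_succ']
      rcases Nat.lt_or_ge ((i : ℕ) + 1) n with h | h
      · exact Submodule.subset_span ⟨⟨(i : ℕ) + 1, h⟩, j, rfl⟩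
      · have hin : (i : ℕ) + 1 = n := le_antisymm i.2 h
        rw [hin, hc]
        have : (∑ m : Fin n, c m • A ^ (m : ℕ)) *ᵥ (fun r => X0 r j)
            = ∑ m : Fin n, c m • ((A ^ (m : ℕ)) *ᵥ (fun r => X0 r j)) := by
          funext r
          simp only [mulVec, dotProduct, Matrix.sum_apply, Finset.sum_apply, Matrix.smul_apply,
            Pi.smul_apply, smul_eq_mul, Finset.sum_mul, Finset.mul_sum, mul_assoc]
          rw [Finset.sum_comm]
        rw [this]
        exact Submodule.sum_mem _ fun m _ =>
          Submodule.smul_mem _ _ (Submodule.subset_span ⟨m, j, rfl⟩)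
    | zero => simpa using Submodule.zero_mem _
    | add x y _ _ hx hy => rw [mulVec_add]; exact Submodule.add_mem _ hx hy
    | smul a x _ hx => rw [mulVec_smul]; exact Submodule.smul_mem _ _ hx
  -- matrices with all columns in Kr, applied to vectors, stay in Kr
  have hMv : ∀ (M : Matrix (Fin n) (Fin k) ℝ), (∀ j, (fun r => M r j) ∈ Kr) →
      ∀ w : Fin k → ℝ, M *ᵥ w ∈ Kr := by
    intro M hM w
    have : M *ᵥ w = ∑ m : Fin k, w m • (fun r => M r m) := by
      funext r
      simp [mulVec, dotProduct, Finset.sum_apply, mul_comm]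
    rw [this]
    exact Submodule.sum_mem _ fun m _ => Submodule.smul_mem _ _ (hM m)
  constructor
  · -- forward: columns of every reachable matrix lie in Kr
    rintro ⟨T, W₁, W₂, X, hX0, hrec, hXT⟩
    rcases Nat.eq_zero_or_pos n with h0 | hn
    · intro j
      have : (fun r => Y r j) = 0 := by
        funext r; exact absurd r.2 (by omega)
      rw [this]; exact Submodule.zero_mem _
    have key : ∀ t, ∀ j : Fin k, (fun r => X t r j) ∈ Kr := by
      intro t
      induction t with
      | zero =>
        intro j
        rw [hX0, hKr]
        have : (fun r => X0 r j) = (A ^ ((⟨0, hn⟩ : Fin n) : ℕ)) *ᵥ (fun r => X0 r j) := by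
          simp
        exact Submodule.subset_span ⟨⟨0, hn⟩, j, this⟩
      | succ t ih =>
        intro j
        have hcolmul : ∀ (M : Matrix (Fin n) (Fin k) ℝ) (W : Matrix (Fin k) (Fin k) ℝ)
            (j : Fin k), (fun r => (M * W) r j) = M *ᵥ (fun m => W m j) := by
          intro M W j
          funext r
          simp [Matrix.mul_apply, mulVec, dotProduct]
        have hcol : (fun r => X (t + 1) r j)
            = (1 - α) • ((A * X t) *ᵥ (fun m => W₁ t m j))
              + α • (X0 *ᵥ (fun m => W₂ t m j)) := by
          rw [← hcolmul (A * X t) (W₁ t) j, ← hcolmul X0 (W₂ t) j]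
          funext r
          rw [hrec t]
          simp [Matrix.add_apply, Matrix.smul_apply]
        rw [hcol]
        refine Submodule.add_mem _ (Submodule.smul_mem _ _ ?_) (Submodule.smul_mem _ _ ?_)
        · rw [← mulVec_mulVec]
          exact hAcl _ (hMv _ ih _)
        · refine hMv _ (fun m => ?_) _
          rw [hKr]
          have : (fun r => X0 r m) = (A ^ ((⟨0, hn⟩ : Fin n) : ℕ)) *ᵥ (fun r => X0 r m) := by
            simp
          exact Submodule.subset_span ⟨⟨0, hn⟩, m, this⟩
    intro j
    have := key T j
    rwa [hXT] at this
  · -- backward: construct the weights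
    intro hY
    -- decompose each column of Y
    have hYdec : ∃ C : Fin n → Matrix (Fin k) (Fin k) ℝ,
        Y = ∑ i : Fin n, (A ^ (i : ℕ)) * X0 * C i := by
      have hcol : ∀ j : Fin k, ∃ d : Fin n × Fin k → ℝ,
          (∑ p : Fin n × Fin k, d p • ((A ^ (p.1 : ℕ)) *ᵥ (fun r => X0 r p.2)))
            = (fun r => Y r j) := by
        intro j
        have := hY j
        rw [hKr, hset, Submodule.mem_span_range_iff_exists_fun] at this
        exact this
      choose d hd using hcol
      refine ⟨fun i => Matrix.of (fun m j => d j (i, m)), ?_⟩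
      ext r j
      have := congrFun (hd j) r
      rw [← this]
      simp only [Matrix.sum_apply, Fintype.sum_prod_type, Finset.sum_apply, Pi.smul_apply,
        smul_eq_mul, Matrix.mul_apply, mulVec, dotProduct, Matrix.of_apply]
      refine Finset.sum_congr rfl fun i _ => ?_
      refine Finset.sum_congr rfl fun m _ => ?_
      rw [Finset.sum_mul]
      rw [Finset.mul_sum]
      refine Finset.sum_congr rfl fun q _ => ?_
      ring
    obtain ⟨C, hC⟩ := hYdec
    -- the effective input matrices
    set C' : ℕ → Matrix (Fin k) (Fin k) ℝ :=
      fun i => if h : i < n then C ⟨i, h⟩ - c ⟨i, h⟩ • 1 else 0 with hC'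
    set B : ℕ → Matrix (Fin k) (Fin k) ℝ := fun t => C' (n - 1 - t) with hB
    -- the trajectory
    set X : ℕ → Matrix (Fin n) (Fin k) ℝ :=
      fun t => Nat.rec X0 (fun t Xt => A * Xt + X0 * B t) t with hX
    have hXrec : ∀ t, X (t + 1) = A * X t + X0 * B t := fun t => rfl
    refine ⟨n, fun _ => (1 - α)⁻¹ • (1 : Matrix (Fin k) (Fin k) ℝ), fun t => α⁻¹ • B t, X, rfl, ?_, ?_⟩
    · intro t
      rw [hXrec t]
      have h1 : (1 - α) • (A * X t * ((1 - α)⁻¹ • (1 : Matrix (Fin k) (Fin k) ℝ))) = A * X t := by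
        rw [Matrix.mul_smul, Matrix.mul_one, smul_smul,
          mul_inv_cancel₀ (by linarith : (1:ℝ) - α ≠ 0), one_smul]
      have h2 : α • (X0 * (α⁻¹ • B t)) = X0 * B t := by
        rw [Matrix.mul_smul, smul_smul, mul_inv_cancel₀ (ne_of_gt hα0), one_smul]
      rw [h1, h2]
    · -- X n = Y
      have hXform : ∀ T, X T = A ^ T * X0 + ∑ i ∈ Finset.range T, A ^ (T - 1 - i) * X0 * B i := by
        intro T
        induction T with
        | zero => simp [hX]
        | succ T ih =>
          rw [hXrec T, ih, Finset.sum_range_succ]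
          rw [Matrix.mul_add, Matrix.mul_sum]
          have hpow : ∀ i ∈ Finset.range T,
              A * (A ^ (T - 1 - i) * X0 * B i) = A ^ (T + 1 - 1 - i) * X0 * B i := by
            intro i hi
            have hi' : i < T := Finset.mem_range.mp hi
            rw [← Matrix.mul_assoc, ← Matrix.mul_assoc, ← pow_succ']
            congr 3
            omega
          rw [Finset.sum_congr rfl hpow]
          have e1 : A * (A ^ T * X0) = A ^ (T + 1) * X0 := by
            rw [← Matrix.mul_assoc, ← pow_succ']
          have e2 : A ^ (T + 1 - 1 - T) * X0 * B T = X0 * B T := by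
            simp
          rw [e1, e2]
          abel
      rw [hXform n]
      have hrefl : ∑ i ∈ Finset.range n, A ^ (n - 1 - i) * X0 * B i
          = ∑ i ∈ Finset.range n, A ^ i * X0 * C' i := by
        simp only [hB]
        exact Finset.sum_range_reflect (fun i => A ^ i * X0 * C' i) n
      rw [hrefl]
      have hC'sum : ∑ i ∈ Finset.range n, A ^ i * X0 * C' i
          = ∑ i : Fin n, A ^ (i : ℕ) * X0 * (C i - c i • 1) := by
        rw [← Fin.sum_univ_eq_sum_range (fun i => A ^ i * X0 * C' i) n]
        refine Finset.sum_congr rfl fun i _ => ?_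
        rw [hC']
        simp [i.2]
      rw [hC'sum, hC, hc]
      rw [Matrix.sum_mul]
      simp only [Matrix.mul_sub, Matrix.mul_smul, Matrix.mul_one, Matrix.smul_mul]
      rw [Finset.sum_sub_distrib]
      abel
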